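/- Let C ∈ ℝ^{d×(d+1)} be positively spanning, let B ∈ ℝ^{(d'-d)×(d'-d)} be invertible, and M ∈ ℝ^{(d'-d)×(d+1)}. Suppose that for every j = 1,…,d'-d and every i = 1,…,d+1, the determinant of the (d+1)×(d+1) matrix obtained by stacking C on top of the j-th row of B⁻¹M has the same sign as (-1)^{d+i}·det(C(i)) (where C(i) is C with column i removed). Then the d'×(d'+1) block matrix G = [[C, 0],[B⁻¹M, Id_{d'-d}]] (columns of C and B⁻¹M first, then the identity block columns) is positively spanning. -/

import Mathlib

/-- The minor of a `d × (d+1)` matrix obtained by deleting the `i`-th column. -/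
noncomputable def matMinor {d : ℕ} (M : Matrix (Fin d) (Fin (d+1)) ℝ) (i : Fin (d+1)) : ℝ :=
  (M.submatrix id i.succAbove).det

/-- `M` is positively spanning: the signed minors `(-1)^i · minor(M,i)` are all
nonzero and of the same sign (stated as: any two of them have positive product). -/
noncomputable def PositivelySpanning {d : ℕ} (M : Matrix (Fin d) (Fin (d+1)) ℝ) : Prop :=
  ∀ i j : Fin (d+1),
    0 < ((-1 : ℝ)^((i : ℕ)+1) * matMinor M i) * ((-1 : ℝ)^((j : ℕ)+1) * matMinor M j)


/-- The `d'×(d'+1)` block matrix `[[C, 0], [N, Id]]` (with `d' = d + e`),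
reindexed by `Fin`s. -/
noncomputable def blockG {d e : ℕ} (C : Matrix (Fin d) (Fin (d+1)) ℝ)
    (N : Matrix (Fin e) (Fin (d+1)) ℝ) : Matrix (Fin (d+e)) (Fin (d+e+1)) ℝ :=
  Matrix.reindex finSumFinEquiv (finSumFinEquiv.trans (finCongr (by omega : d+1+e = d+e+1)))
    (Matrix.fromBlocks C 0 N 1)

def colMap (d e : ℕ) (i : Fin (d+e+1)) : Fin d ⊕ Fin e → Fin (d+1) ⊕ Fin e :=
  fun x => (finSumFinEquiv.trans (finCongr (by omega : d+1+e = d+e+1))).symm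
      (i.succAbove (finSumFinEquiv x))

lemma val_succAbove {n : ℕ} (p : Fin (n+1)) (j : Fin n) :
    ((p.succAbove j : Fin (n+1)) : ℕ) = if (j:ℕ) < (p:ℕ) then (j:ℕ) else (j:ℕ)+1 := by
  rw [Fin.succAbove]
  split_ifs with h1 h2 <;> simp_all [Fin.lt_def, Fin.castSucc, Fin.succ]

lemma coe_cycleRange {n : ℕ} (t b : Fin (n+1)) :
    ((t.cycleRange b : Fin (n+1)) : ℕ) = if b = t then 0 else if (b:ℕ) < t then (b:ℕ)+1 else b := by
  rcases lt_trichotomy b t with h|h|h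
  · rw [Fin.cycleRange_of_lt h, if_neg (ne_of_lt h), if_pos (show (b:ℕ)<(t:ℕ) from h),
      Fin.val_add_one_of_lt (lt_of_lt_of_le h (Fin.le_last t))]
  · rw [Fin.cycleRange_of_eq h, if_pos h]; rfl
  · rw [Fin.cycleRange_of_gt h, if_neg (ne_of_gt h), if_neg (by omega)]

def phiEquiv (d : ℕ) {e : ℕ} (t : Fin (e+1)) : (Fin (d+1) ⊕ Fin e) ≃ (Fin d ⊕ Fin (e+1)) where
  toFun x := match x with
    | .inl a => if h : (a:ℕ) < d then .inl ⟨a, h⟩ else .inr t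
    | .inr s => .inr ⟨if (s:ℕ) < (t:ℕ) then (s:ℕ) else (s:ℕ)+1,
        by have := s.isLt; split_ifs <;> omega⟩
  invFun y := match y with
    | .inl a => .inl ⟨(a:ℕ), by have := a.isLt; omega⟩
    | .inr b => if h1 : (b:ℕ) = (t:ℕ) then .inl (Fin.last d)
        else if h2 : (b:ℕ) < (t:ℕ) then .inr ⟨(b:ℕ), by have := t.isLt; omega⟩
        else .inr ⟨(b:ℕ)-1, by have := b.isLt; omega⟩
  left_inv := by
    rintro (a|s)
    · dsimp only
      split_ifs with h
      · simp
      · have ha : (a:ℕ) = d := by have := a.isLt; omega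
        simp [Fin.last, Fin.ext_iff, ha]
    · dsimp only
      split_ifs with h h1 h2 h3 h4 <;> simp_all [Fin.ext_iff, Fin.last] <;> omega
  right_inv := by
    rintro (a|b)
    · dsimp only
      split_ifs with h
      · simp
      · exact absurd a.isLt (by omega)
    · dsimp only
      split_ifs with h h1 <;> simp_all [Fin.ext_iff, Fin.last] <;> split_ifs <;> omega

def sigmaPerm (d : ℕ) {e : ℕ} (t : Fin (e+1)) : Equiv.Perm (Fin (d+1) ⊕ Fin e) :=
  (phiEquiv d (0 : Fin (e+1))).symm.permCongr
    (Equiv.sumCongr (Equiv.refl (Fin d)) t.cycleRange)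

lemma sign_sigmaPerm (d : ℕ) {e : ℕ} (t : Fin (e+1)) :
    Equiv.Perm.sign (sigmaPerm d t) = (-1 : ℤˣ)^(t:ℕ) := by
  rw [sigmaPerm, Equiv.Perm.sign_permCongr, Equiv.Perm.sign_sumCongr,
    Fin.sign_cycleRange]
  simp

lemma sigmaPerm_inl_lt {d e : ℕ} (t : Fin (e+1)) (a : Fin (d+1)) (ha : (a:ℕ) < d) :
    sigmaPerm d t (.inl a) = .inl a := by
  simp only [sigmaPerm, Equiv.permCongr_apply, Equiv.symm_symm, phiEquiv,
    Equiv.coe_fn_mk, Equiv.coe_fn_symm_mk, dif_pos ha]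
  rfl


lemma sigmaPerm_inl_last {d e : ℕ} (t : Fin (e+1)) (a : Fin (d+1)) (ha : ¬ (a:ℕ) < d) :
    sigmaPerm d t (.inl a) =
      if h : (t:ℕ) = 0 then .inl a else .inr ⟨0, by have := t.isLt; omega⟩ := by
  simp only [sigmaPerm, Equiv.permCongr_apply, Equiv.symm_symm, phiEquiv,
    Equiv.coe_fn_mk, Equiv.coe_fn_symm_mk, dif_neg ha]
  simp only [Equiv.sumCongr_apply, Sum.map_inr]
  have haa : a = Fin.last d := by have := a.isLt; simp [Fin.ext_iff, Fin.last]; omega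
  simp only [coe_cycleRange, Fin.ext_iff, Fin.val_zero, Fin.last]
  subst haa
  by_cases h0 : (t:ℕ) = 0
  · simp [h0]; rfl
  · have h0' : 0 < (t:ℕ) := Nat.pos_of_ne_zero h0
    simp [h0, h0', Ne.symm h0]

lemma sigmaPerm_inr {d e : ℕ} (t : Fin (e+1)) (s : Fin e) :
    sigmaPerm d t (.inr s) =
      if (s:ℕ)+1 = (t:ℕ) then .inl (Fin.last d)
      else .inr ⟨if (s:ℕ)+1 < (t:ℕ) then (s:ℕ)+1 else (s:ℕ), by split_ifs <;> omega⟩ := by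
  have hs := s.isLt
  simp only [sigmaPerm, Equiv.permCongr_apply, Equiv.symm_symm, phiEquiv,
    Equiv.coe_fn_mk, Equiv.coe_fn_symm_mk, Equiv.sumCongr_apply, Sum.map_inr]
  simp only [coe_cycleRange, Fin.ext_iff, Fin.val_zero, Fin.last]
  rcases lt_trichotomy ((s:ℕ)+1) (t:ℕ) with h | h | h
  · have h1 : ¬ (s:ℕ)+1 = t := by omega
    simp [h, h1]
  · simp [h]
  · have h1 : ¬ (s:ℕ)+1 = t := by omega
    have h2 : ¬ (s:ℕ)+1 < t := by omega
    have h3 : ¬ (s:ℕ) < t := by omega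
    simp [h1, h2, h3]

lemma minor_eq_det {d e : ℕ} (C : Matrix (Fin d) (Fin (d+1)) ℝ)
    (N : Matrix (Fin e) (Fin (d+1)) ℝ) (i : Fin (d+e+1)) :
    matMinor (blockG C N) i =
      ((Matrix.fromBlocks C 0 N 1).submatrix id (colMap d e i)).det := by
  have h : (blockG C N).submatrix id i.succAbove =
      ((Matrix.fromBlocks C 0 N 1).submatrix id (colMap d e i)).submatrix
        finSumFinEquiv.symm finSumFinEquiv.symm := by
    ext r c
    simp [blockG, colMap, Matrix.submatrix, Matrix.reindex]
  rw [matMinor, h, Matrix.det_submatrix_equiv_self]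

lemma colMap_lt {d e : ℕ} (i : Fin (d+e+1)) (hi : (i:ℕ) < d+1) :
    colMap d e i = Sum.map (Fin.succAbove ⟨(i:ℕ), hi⟩) id := by
  funext x
  rw [colMap, Equiv.symm_apply_eq]
  cases x with
  | inl a =>
    simp only [Sum.map_inl, Equiv.trans_apply, finSumFinEquiv_apply_left]
    apply Fin.ext
    simp only [Fin.coe_castAdd, finCongr_apply, Fin.coe_cast, val_succAbove]
  | inr b =>
    simp only [Sum.map_inr, id, Equiv.trans_apply, finSumFinEquiv_apply_right]
    apply Fin.ext
    simp only [Fin.coe_natAdd, finCongr_apply, Fin.coe_cast, val_succAbove]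
    split_ifs <;> omega

lemma minor_case1 {d e : ℕ} (C : Matrix (Fin d) (Fin (d+1)) ℝ)
    (N : Matrix (Fin e) (Fin (d+1)) ℝ) (i : Fin (d+e+1)) (hi : (i:ℕ) < d+1) :
    matMinor (blockG C N) i = matMinor C ⟨(i:ℕ), hi⟩ := by
  rw [minor_eq_det, colMap_lt (hi := hi)]
  have : (Matrix.fromBlocks C 0 N 1).submatrix id
      (Sum.map (Fin.succAbove ⟨(i:ℕ), hi⟩) id) =
      Matrix.fromBlocks (C.submatrix id (Fin.succAbove ⟨(i:ℕ), hi⟩)) 0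
        (N.submatrix id (Fin.succAbove ⟨(i:ℕ), hi⟩)) (1 : Matrix (Fin e) (Fin e) ℝ) := by
    ext r c
    cases r <;> cases c <;> rfl
  rw [this, Matrix.det_fromBlocks_zero₁₂, Matrix.det_one, mul_one, matMinor]

lemma psi_eval {d e : ℕ} (t : Fin (e+1)) (y : Fin (d+1) ⊕ Fin e) :
    colMap d (e+1) ⟨d+1+(t:ℕ), by have := t.isLt; omega⟩ (phiEquiv d t (sigmaPerm d t y)) =
      Sum.map id t.succAbove y := by
  have ht := t.isLt
  rcases y with a | s
  · by_cases ha : (a:ℕ) < d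
    · rw [sigmaPerm_inl_lt t a ha]
      simp only [phiEquiv, Equiv.coe_fn_mk, dif_pos ha, Sum.map_inl, id]
      rw [colMap, Equiv.symm_apply_eq]
      apply Fin.ext
      simp only [Equiv.trans_apply, finSumFinEquiv_apply_left, finSumFinEquiv_apply_right,
        finCongr_apply, Fin.coe_cast, Fin.coe_castAdd, Fin.coe_natAdd, val_succAbove]
      split_ifs <;> omega
    · have haa : (a:ℕ) = d := by have := a.isLt; omega
      rw [sigmaPerm_inl_last t a ha]
      split_ifs with h <;>
      · simp only [phiEquiv, Equiv.coe_fn_mk, dif_neg ha, Sum.map_inl, id]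
        rw [colMap, Equiv.symm_apply_eq]
        apply Fin.ext
        simp only [Equiv.trans_apply, finSumFinEquiv_apply_left, finSumFinEquiv_apply_right,
          finCongr_apply, Fin.coe_cast, Fin.coe_castAdd, Fin.coe_natAdd, val_succAbove]
        split_ifs <;> omega
  · have hs := s.isLt
    rw [sigmaPerm_inr]
    split_ifs with h h2 <;>
    [ (simp only [phiEquiv, Equiv.coe_fn_mk, Fin.val_last];
       rw [dif_neg (lt_irrefl d)]);
      simp only [phiEquiv, Equiv.coe_fn_mk];
      simp only [phiEquiv, Equiv.coe_fn_mk]] <;>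
    · rw [colMap, Equiv.symm_apply_eq]
      apply Fin.ext
      simp only [Sum.map_inr, Equiv.trans_apply, finSumFinEquiv_apply_left,
        finSumFinEquiv_apply_right, finCongr_apply, Fin.coe_cast, Fin.coe_castAdd,
        Fin.coe_natAdd, val_succAbove]
      split_ifs <;> omega

lemma minor_case2 {d e : ℕ} (C : Matrix (Fin d) (Fin (d+1)) ℝ)
    (N : Matrix (Fin (e+1)) (Fin (d+1)) ℝ) (t : Fin (e+1)) :
    matMinor (blockG C N) ⟨d+1+(t:ℕ), by have := t.isLt; omega⟩ =
      (-1:ℝ)^(t:ℕ) * (Matrix.of (Fin.snoc (fun k : Fin d => C k) (N t))).det := by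
  rw [minor_eq_det]
  set i : Fin (d+(e+1)+1) := ⟨d+1+(t:ℕ), by have := t.isLt; omega⟩ with hi
  set A := (Matrix.fromBlocks C 0 N 1).submatrix id (colMap d (e+1) i) with hA
  have key : A.submatrix (phiEquiv d t) (fun y => phiEquiv d t (sigmaPerm d t y)) =
      Matrix.fromBlocks (Matrix.of (Fin.snoc (fun k : Fin d => C k) (N t))) 0
        (N.submatrix t.succAbove id) (1 : Matrix (Fin e) (Fin e) ℝ) := by
    ext x y
    have hψ : colMap d (e+1) i (phiEquiv d t (sigmaPerm d t y)) = Sum.map id t.succAbove y :=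
      psi_eval t y
    have hL : A.submatrix (phiEquiv d t) (fun y => phiEquiv d t (sigmaPerm d t y)) x y =
        (Matrix.fromBlocks C 0 N 1) (phiEquiv d t x) (Sum.map id t.succAbove y) := by
      simp only [Matrix.submatrix_apply, hA, id, hψ]
    rw [hL]
    rcases x with a | s <;> rcases y with b | u
    · by_cases ha : (a:ℕ) < d
      · simp only [phiEquiv, Equiv.coe_fn_mk, dif_pos ha, Sum.map_inl,
          Matrix.fromBlocks_apply₁₁, Matrix.of_apply, id]
        simp [Fin.snoc, ha]
        rfl
      · simp only [phiEquiv, Equiv.coe_fn_mk, dif_neg ha, Sum.map_inl,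
          Matrix.fromBlocks_apply₂₁, Matrix.of_apply, id]
        simp [Fin.snoc, ha]
    · by_cases ha : (a:ℕ) < d
      · simp only [phiEquiv, Equiv.coe_fn_mk, dif_pos ha, Sum.map_inr,
          Matrix.fromBlocks_apply₁₂, Matrix.zero_apply]
      · simp only [phiEquiv, Equiv.coe_fn_mk, dif_neg ha, Sum.map_inr,
          Matrix.fromBlocks_apply₂₂]
        rw [Matrix.one_apply_ne (Fin.succAbove_ne t u).symm]
        simp [Matrix.fromBlocks_apply₁₂]
    · simp only [phiEquiv, Equiv.coe_fn_mk, Sum.map_inl, Matrix.fromBlocks_apply₂₁,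
        Matrix.submatrix_apply, id]
      congr 1
      apply Fin.ext
      simp [val_succAbove]
    · simp only [phiEquiv, Equiv.coe_fn_mk, Sum.map_inr, Matrix.fromBlocks_apply₂₂]
      have hv : (⟨if (s:ℕ) < (t:ℕ) then (s:ℕ) else (s:ℕ)+1, by have := s.isLt; split_ifs <;> omega⟩ : Fin (e+1)) = t.succAbove s := by
        apply Fin.ext; simp [val_succAbove]
      rw [hv, Matrix.one_apply, Matrix.one_apply]
      simp [Fin.succAbove_right_injective.eq_iff]
  have h2 := Matrix.det_permute' (sigmaPerm d t) (A.submatrix (phiEquiv d t) (phiEquiv d t))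
  have h1 : (A.submatrix (phiEquiv d t) (phiEquiv d t)).submatrix id (sigmaPerm d t) =
      A.submatrix (phiEquiv d t) (fun y => phiEquiv d t (sigmaPerm d t y)) := rfl
  rw [h1, key, Matrix.det_fromBlocks_zero₁₂, Matrix.det_one, mul_one,
    Matrix.det_submatrix_equiv_self, sign_sigmaPerm] at h2
  have hsgn : ((((-1 : ℤˣ)^(t:ℕ) : ℤˣ) : ℤ) : ℝ) = (-1:ℝ)^(t:ℕ) := by
    push_cast
    rfl
  rw [hsgn] at h2
  rw [h2, ← mul_assoc, ← pow_add]
  rw [Even.neg_one_pow ⟨(t:ℕ), rfl⟩, one_mul]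

theorem blockG_positivelySpanning {d e : ℕ} (C : Matrix (Fin d) (Fin (d+1)) ℝ)
    (B : Matrix (Fin e) (Fin e) ℝ) (hB : IsUnit B.det)
    (M : Matrix (Fin e) (Fin (d+1)) ℝ)
    (hC : PositivelySpanning C)
    (hsign : ∀ (j : Fin e) (i : Fin (d+1)),
      0 < (Matrix.of (Fin.snoc (fun k : Fin d => C k) ((B⁻¹ * M) j))).det *
          ((-1 : ℝ)^(d + (i : ℕ) + 1) * matMinor C i)) :
    PositivelySpanning (blockG C (B⁻¹ * M)) := by
  suffices H : ∀ i : Fin (d+e+1),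
      0 < ((-1:ℝ)^((i:ℕ)+1) * matMinor (blockG C (B⁻¹*M)) i) *
        ((-1:ℝ)^((0:ℕ)+1) * matMinor C 0) by
    intro i j
    have h1 := H i
    have h2 := H j
    set si := (-1:ℝ)^((i:ℕ)+1) * matMinor (blockG C (B⁻¹*M)) i
    set sj := (-1:ℝ)^((j:ℕ)+1) * matMinor (blockG C (B⁻¹*M)) j
    set c := (-1:ℝ)^((0:ℕ)+1) * matMinor C 0
    nlinarith [mul_pos h1 h2, sq_nonneg c, sq_nonneg (si - sj), sq_nonneg (si + sj)]
  intro i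
  by_cases hlt : (i:ℕ) < d+1
  · rw [minor_case1 C (B⁻¹*M) i hlt]
    exact hC ⟨(i:ℕ), hlt⟩ 0
  · obtain ⟨e', rfl⟩ : ∃ e', e = e'+1 := ⟨e-1, by have := i.isLt; omega⟩
    set t : Fin (e'+1) := ⟨(i:ℕ)-(d+1), by have := i.isLt; omega⟩ with ht
    have hieq : i = ⟨d+1+(t:ℕ), by have := t.isLt; omega⟩ := by
      apply Fin.ext; simp [ht]; omega
    rw [hieq, minor_case2 C (B⁻¹*M) t]
    set P := (Matrix.of (Fin.snoc (fun k : Fin d => C k) ((B⁻¹*M) t))).det with hP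
    set Q := matMinor C 0 with hQ
    have hs := hsign t 0
    rw [← hP, ← hQ] at hs
    show 0 < ((-1:ℝ)^((d+1+(t:ℕ))+1) * ((-1:ℝ)^(t:ℕ) * P)) * ((-1:ℝ)^((0:ℕ)+1) * Q)
    have h1 : (-1:ℝ)^((d+1+(t:ℕ))+1) * (-1:ℝ)^(t:ℕ) * (-1:ℝ)^((0:ℕ)+1)
        = (-1:ℝ)^(d+(0:ℕ)+1) := by
      rw [← pow_add, ← pow_add,
        show (d+1+(t:ℕ))+1+(t:ℕ)+((0:ℕ)+1) = (d+(0:ℕ)+1)+2*((t:ℕ)+1) from by omega,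
        pow_add, pow_mul]
      norm_num
    have heq : ((-1:ℝ)^((d+1+(t:ℕ))+1) * ((-1:ℝ)^(t:ℕ) * P)) * ((-1:ℝ)^((0:ℕ)+1) * Q)
        = P * ((-1:ℝ)^(d+(0:ℕ)+1) * Q) := by
      linear_combination (P*Q) * h1
    rw [heq]
    exact hs
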